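/- Initialization-system correctness: let Ψ⁰, Ψ¹ be the transition-transform matrices (nonnegative, row sums ψ_i^a = ∑_j ψ_{ij}^a ≤ ψ̄ < 1), and let A∅ᵀ(I − Ψ⁰) = (I − Ψ¹), i.e., A∅ = ((I−Ψ⁰)ᵀ)⁻¹(I−Ψ¹)ᵀ. Fix any state j*, set m̃_i^a := (1 − ψ_i^a)/α, and form the n×n block system A∅ᵀ·[ (I−Ψ⁰)_{·,N\{j*}} , m̃⁰ ] = [ (I−Ψ¹)_{·,N\{j*}} , m̃¹ ] (columns of I−Ψ⁰ except column j*, plus column m̃⁰). Then A∅ is the unique solution of this block system. -/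
import Mathlib


open Matrix

private lemma EF_eq_one {n : ℕ} (α : ℝ) (hαne : α ≠ 0) (jstar : Fin n) :
    (Matrix.of fun j k => if k = jstar then α⁻¹ else if j = k then 1 else 0 :
      Matrix (Fin n) (Fin n) ℝ) *
    (Matrix.of fun j k =>
      if k = jstar then (if j = jstar then α else -1) else if j = k then 1 else 0) = 1 := by
  ext i k
  rw [Matrix.mul_apply, ← Finset.sum_erase_add _ _ (Finset.mem_univ jstar)]
  simp only [Matrix.of_apply]
  have herase : ∀ j ∈ Finset.univ.erase jstar,
      (if j = jstar then α⁻¹ else if i = j then (1:ℝ) else 0) *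
        (if k = jstar then (if j = jstar then α else -1) else if j = k then 1 else 0)
      = (if i = j then (1:ℝ) else 0) *
        (if k = jstar then (-1) else if j = k then 1 else 0) := by
    intro j hj
    rw [if_neg (Finset.ne_of_mem_erase hj), if_neg (Finset.ne_of_mem_erase hj)]
  rw [Finset.sum_congr rfl herase]
  by_cases hi : i = jstar
  · rw [Finset.sum_eq_zero (fun j hj => by
      rw [if_neg (fun h : i = j => Finset.ne_of_mem_erase hj (h.symm.trans hi)), zero_mul])]
    by_cases hk : k = jstar
    · simp [hi, hk, hαne, Matrix.one_apply]
    · simp [hi, hk, Ne.symm hk, hαne, Matrix.one_apply]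
  · rw [Finset.sum_eq_single_of_mem i (Finset.mem_erase.mpr ⟨hi, Finset.mem_univ i⟩)
      (fun b _ hb => by rw [if_neg (fun h => hb (h.symm)), zero_mul])]
    by_cases hk : k = jstar
    · simp [hk, hi, hαne, Matrix.one_apply]
    · simp [hk, hi, Ne.symm hk, hαne, Matrix.one_apply]

private lemma mulE_eq {n : ℕ} (Ψ : Matrix (Fin n) (Fin n) ℝ) (α : ℝ) (jstar : Fin n)
    (i k : Fin n) :
    ((1 - Ψ) * (Matrix.of fun j k => if k = jstar then α⁻¹ else if j = k then 1 else 0 :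
      Matrix (Fin n) (Fin n) ℝ)) i k
      = if k = jstar then (1 - ∑ j, Ψ i j) / α else (1 - Ψ) i k := by
  rw [Matrix.mul_apply]
  simp only [Matrix.of_apply]
  by_cases hk : k = jstar
  · simp only [hk, eq_self_iff_true, if_true]
    rw [← Finset.sum_mul]
    have : ∑ j, (1 - Ψ) i j = 1 - ∑ j, Ψ i j := by
      simp only [Matrix.sub_apply, Finset.sum_sub_distrib]
      congr 1
      simp [Matrix.one_apply]
    rw [this, div_eq_mul_inv]
  · simp only [hk, if_false]
    rw [Finset.sum_eq_single k]
    · simp [hk]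
    · intro b _ hb
      simp [hk, hb]
    · simp

private lemma det_one_sub_ne_zero {n : ℕ} (Ψ : Matrix (Fin n) (Fin n) ℝ)
    (hnn : ∀ i j, 0 ≤ Ψ i j) (ψbar : ℝ) (hψbar : ψbar < 1)
    (hrs : ∀ i, ∑ j, Ψ i j ≤ ψbar) : (1 - Ψ).det ≠ 0 := by
  apply det_ne_zero_of_sum_row_lt_diag
  intro k
  have hdiag : (1 - Ψ) k k = 1 - Ψ k k := by simp [Matrix.one_apply]
  have hkk_le : Ψ k k ≤ ∑ j, Ψ k j :=
    Finset.single_le_sum (fun j _ => hnn k j) (Finset.mem_univ k)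
  have hdiag_pos : 0 < 1 - Ψ k k := by
    have := (hkk_le.trans (hrs k)).trans_lt hψbar
    linarith
  have hsum : ∑ j ∈ Finset.univ.erase k, ‖(1 - Ψ) k j‖ = ∑ j ∈ Finset.univ.erase k, Ψ k j := by
    refine Finset.sum_congr rfl (fun j hj => ?_)
    have hjk : j ≠ k := Finset.ne_of_mem_erase hj
    have : (1 - Ψ) k j = -Ψ k j := by simp [Matrix.one_apply, Ne.symm hjk]
    rw [this, norm_neg, Real.norm_of_nonneg (hnn k j)]
  rw [hsum, hdiag, Real.norm_of_nonneg hdiag_pos.le]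
  have herase : ∑ j ∈ Finset.univ.erase k, Ψ k j = (∑ j, Ψ k j) - Ψ k k :=
    Finset.sum_erase_eq_sub (Finset.mem_univ k)
  rw [herase]
  have := hrs k
  linarith

/-- Initialization-system correctness: with `A∅ = ((I−Ψ⁰)ᵀ)⁻¹(I−Ψ¹)ᵀ`,
row sums `ψ_i^a ≤ ψ̄ < 1`, `m̃_i^a = (1 − ψ_i^a)/α`, and the block system
obtained by replacing column `j*` of `I−Ψ^a` by `m̃^a`, the matrix `A∅` is the
unique solution `X` of `Xᵀ·M⁰ = M¹`. -/
theorem stmt12 {n : ℕ} (Ψ0 Ψ1 : Matrix (Fin n) (Fin n) ℝ)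
    (h0nn : ∀ i j, 0 ≤ Ψ0 i j) (h1nn : ∀ i j, 0 ≤ Ψ1 i j)
    (ψbar : ℝ) (hψbar : ψbar < 1)
    (h0rs : ∀ i, ∑ j, Ψ0 i j ≤ ψbar) (h1rs : ∀ i, ∑ j, Ψ1 i j ≤ ψbar)
    (α : ℝ) (hα : 0 < α) (jstar : Fin n)
    (m0 m1 : Fin n → ℝ)
    (hm0 : ∀ i, m0 i = (1 - ∑ j, Ψ0 i j) / α)
    (hm1 : ∀ i, m1 i = (1 - ∑ j, Ψ1 i j) / α)
    (A : Matrix (Fin n) (Fin n) ℝ)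
    (hA : A = ((1 - Ψ0)ᵀ)⁻¹ * (1 - Ψ1)ᵀ)
    (M0 M1 : Matrix (Fin n) (Fin n) ℝ)
    (hM0 : ∀ i k, M0 i k = if k = jstar then m0 i else (1 - Ψ0) i k)
    (hM1 : ∀ i k, M1 i k = if k = jstar then m1 i else (1 - Ψ1) i k) :
    Aᵀ * M0 = M1 ∧ ∀ X : Matrix (Fin n) (Fin n) ℝ, Xᵀ * M0 = M1 → X = A := by
  have hαne : α ≠ 0 := ne_of_gt hα
  set E : Matrix (Fin n) (Fin n) ℝ :=
    Matrix.of fun j k => if k = jstar then α⁻¹ else if j = k then 1 else 0 with hEdef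
  set F : Matrix (Fin n) (Fin n) ℝ :=
    Matrix.of fun j k =>
      if k = jstar then (if j = jstar then α else -1) else if j = k then 1 else 0 with hFdef
  have hEF : E * F = 1 := EF_eq_one α hαne jstar
  have hM0E : M0 = (1 - Ψ0) * E := by
    ext i k
    rw [hM0, mulE_eq, hm0]
  have hM1E : M1 = (1 - Ψ1) * E := by
    ext i k
    rw [hM1, mulE_eq, hm1]
  have hdet0 : IsUnit (1 - Ψ0).det :=
    isUnit_iff_ne_zero.mpr (det_one_sub_ne_zero Ψ0 h0nn ψbar hψbar h0rs)
  have hAT : Aᵀ = (1 - Ψ1) * (1 - Ψ0)⁻¹ := by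
    rw [hA, Matrix.transpose_mul, Matrix.transpose_transpose, Matrix.transpose_nonsing_inv,
      Matrix.transpose_transpose]
  have hpart1 : Aᵀ * M0 = M1 := by
    rw [hAT, hM0E, hM1E, ← Matrix.mul_assoc, Matrix.mul_assoc (1 - Ψ1),
      Matrix.nonsing_inv_mul _ hdet0, Matrix.mul_one]
  refine ⟨hpart1, fun X hX => ?_⟩
  have h1 : Xᵀ * ((1 - Ψ0) * E) = Aᵀ * ((1 - Ψ0) * E) := by
    rw [← hM0E, hX, hpart1]
  have h2 : Xᵀ * (1 - Ψ0) = Aᵀ * (1 - Ψ0) := by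
    have := congrArg (fun M => M * F) h1
    simpa only [Matrix.mul_assoc, hEF, Matrix.mul_one] using this
  have h3 : Xᵀ = Aᵀ := by
    have := congrArg (fun M => M * (1 - Ψ0)⁻¹) h2
    simpa only [Matrix.mul_assoc, Matrix.mul_nonsing_inv _ hdet0, Matrix.mul_one] using this
  calc X = Xᵀᵀ := (Matrix.transpose_transpose X).symm
    _ = Aᵀᵀ := by rw [h3]
    _ = A := Matrix.transpose_transpose A
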